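/- Consider a non-degenerate finite partial monitoring game with k actions and d outcomes. Let a, b ∈ [k] be distinct actions and u ∈ C_a. Then there exists an action c ∈ N_b \ {b} such that ⟨ℓ_b − ℓ_c, u⟩ ≥ 0. Furthermore, if u ∉ C_b, then c can be chosen so that ⟨ℓ_b − ℓ_c, u⟩ > 0. -/

import Mathlib

open scoped BigOperators Classical

noncomputable section

/-- The affine dimension of a subset of `ℝ^d`, with the convention that the empty
set has dimension `-1`. -/
def affDim {d : ℕ} (s : Set (Fin d → ℝ)) : ℤ :=
  if s = ∅ then -1 else (Module.finrank ℝ (affineSpan ℝ s).direction : ℤ)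

/-- The cell of action `a`: distributions over outcomes for which `a` has minimal
expected loss. -/
def cell {k d : ℕ} (L : Fin k → Fin d → ℝ) (a : Fin k) : Set (Fin d → ℝ) :=
  {u | u ∈ stdSimplex ℝ (Fin d) ∧ ∀ b : Fin k, ∑ x, L a x * u x ≤ ∑ x, L b x * u x}

/-- An action is Pareto optimal if its cell has affine dimension `d - 1`. -/
def Pareto {k d : ℕ} (L : Fin k → Fin d → ℝ) (a : Fin k) : Prop :=
  affDim (cell L a) = (d : ℤ) - 1

/-- Two Pareto optimal actions are neighbours if their cells intersect in a set of
affine dimension `d - 2`. -/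
def Neighbours {k d : ℕ} (L : Fin k → Fin d → ℝ) (a b : Fin k) : Prop :=
  Pareto L a ∧ Pareto L b ∧ affDim (cell L a ∩ cell L b) = (d : ℤ) - 2

/-- A game is non-degenerate if there are no duplicate actions and every action is
Pareto optimal. -/
def NondegenerateGame {k d : ℕ} (L : Fin k → Fin d → ℝ) : Prop :=
  (∀ a b : Fin k, a ≠ b → (fun x => L a x) ≠ (fun x => L b x)) ∧ ∀ a : Fin k, Pareto L a

/-- The neighbourhood `N_a` of an action `a`. -/
def nbhd {k d : ℕ} (L : Fin k → Fin d → ℝ) (a : Fin k) : Set (Fin k) :=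
  {b | (d : ℤ) - 2 ≤ affDim (cell L a ∩ cell L b)}

/- ===================== auxiliary development ===================== -/

open Matrix MeasureTheory

namespace PMAux

variable {k d : ℕ}

lemma dot_abs_le (φ z : Fin d → ℝ) : |φ ⬝ᵥ z| ≤ (∑ i, |φ i|) * ‖z‖ := by
  calc |φ ⬝ᵥ z| ≤ ∑ i, |φ i * z i| := Finset.abs_sum_le_sum_abs _ _
  _ ≤ ∑ i, |φ i| * ‖z‖ := by
      refine Finset.sum_le_sum fun i _ => ?_
      rw [abs_mul]
      exact mul_le_mul_of_nonneg_left (by simpa using norm_le_pi_norm z i) (abs_nonneg _)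
  _ = (∑ i, |φ i|) * ‖z‖ := by rw [Finset.sum_mul]

variable (L : Fin k → Fin d → ℝ)

lemma isClosed_cell (a : Fin k) : IsClosed (cell L a) := by
  have h2 : ∀ b : Fin k, IsClosed {u : Fin d → ℝ | L a ⬝ᵥ u ≤ L b ⬝ᵥ u} := by
    intro b
    have hc : ∀ c : Fin k, Continuous fun u : Fin d → ℝ => L c ⬝ᵥ u := by
      intro c
      exact continuous_finset_sum _ fun i _ => (continuous_const.mul (continuous_apply i))
    exact isClosed_le (hc a) (hc b)
  have : cell L a = stdSimplex ℝ (Fin d) ∩ ⋂ b : Fin k, {u | L a ⬝ᵥ u ≤ L b ⬝ᵥ u} := by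
    ext u; simp [cell, Set.mem_iInter, dotProduct]
  rw [this]
  exact (isClosed_stdSimplex _ _).inter (isClosed_iInter h2)

lemma convex_cell (a : Fin k) : Convex ℝ (cell L a) := by
  have : cell L a = stdSimplex ℝ (Fin d) ∩ ⋂ b : Fin k, {u | L a ⬝ᵥ u - L b ⬝ᵥ u ≤ 0} := by
    ext u; simp [cell, Set.mem_iInter, sub_nonpos, dotProduct]
  rw [this]
  refine (convex_stdSimplex ℝ (Fin d)).inter (convex_iInter fun b => ?_)
  refine convex_halfSpace_le ⟨fun x y => ?_, fun s x => ?_⟩ 0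
  · simp [dotProduct_add, mul_add, Finset.sum_add_distrib]; ring
  · simp [dotProduct_smul, smul_eq_mul]; ring

lemma cell_dot_nonneg {a c : Fin k} {u : Fin d → ℝ} (hu : u ∈ cell L a) :
    0 ≤ (L c - L a) ⬝ᵥ u := by
  rw [sub_dotProduct]
  have h : L a ⬝ᵥ u ≤ L c ⬝ᵥ u := hu.2 c
  linarith

lemma aux_sum (i j : Fin d) :
    ∑ l, (Pi.single j 1 - Pi.single i 1 : Fin d → ℝ) l = 0 := by
  simp [Finset.sum_sub_distrib, Finset.sum_pi_single]

lemma aux_norm (i j : Fin d) :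
    ‖(Pi.single j 1 - Pi.single i 1 : Fin d → ℝ)‖ ≤ 1 := by
  rw [pi_norm_le_iff_of_nonneg zero_le_one]
  intro l
  rw [Real.norm_eq_abs]
  simp only [Pi.sub_apply, Pi.single_apply]
  split_ifs <;> norm_num

lemma exists_other (hd : 2 ≤ d) (i : Fin d) : ∃ j : Fin d, j ≠ i := by
  rcases eq_or_ne i ⟨0, by omega⟩ with rfl | h
  · exact ⟨⟨1, by omega⟩, by simp [Fin.ext_iff]⟩
  · exact ⟨⟨0, by omega⟩, fun hh => h (hh ▸ rfl)⟩

lemma interior_coord_pos {a : Fin k} {w : Fin d → ℝ} {ε : ℝ} (hd : 2 ≤ d) (hε : 0 < ε)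
    (hball : ∀ y : Fin d → ℝ, (∑ i, y i) = 0 → ‖y‖ < ε → w + y ∈ cell L a)
    (i : Fin d) : ε / 2 ≤ w i := by
  obtain ⟨j, hj⟩ := exists_other hd i
  set e : Fin d → ℝ := Pi.single j 1 - Pi.single i 1 with he
  have hsum : ∑ l, ((ε/2) • e) l = 0 := by
    simp only [Pi.smul_apply, smul_eq_mul, ← Finset.mul_sum, aux_sum i j]
    rw [he, aux_sum i j]
    ring
  have hnorm : ‖(ε/2) • e‖ < ε := by
    rw [norm_smul, Real.norm_eq_abs, abs_of_pos (by linarith)]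
    have := aux_norm (d := d) i j
    nlinarith [norm_nonneg e]
  have hmem := hball _ hsum hnorm
  have h0 : 0 ≤ (w + (ε/2) • e) i := (hmem.1).1 i
  have hei : e i = -1 := by simp [he, Pi.single_apply, hj]
  simp only [Pi.add_apply, Pi.smul_apply, hei, smul_eq_mul] at h0
  linarith

lemma strict_at_interior (hnd : ∀ a b : Fin k, a ≠ b → (fun x => L a x) ≠ (fun x => L b x))
    {a c : Fin k} (hca : c ≠ a) {w : Fin d → ℝ} {ε : ℝ} (hε : 0 < ε)
    (hw : w ∈ cell L a)
    (hball : ∀ y : Fin d → ℝ, (∑ i, y i) = 0 → ‖y‖ < ε → w + y ∈ cell L a) :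
    0 < (L c - L a) ⬝ᵥ w := by
  rcases lt_or_eq_of_le (cell_dot_nonneg L hw (c := c)) with h | h
  · exact h
  exfalso
  have hzero : ∀ y : Fin d → ℝ, (∑ i, y i) = 0 → ‖y‖ < ε → 0 ≤ (L c - L a) ⬝ᵥ y := by
    intro y hy0 hyn
    have hmem := hball y hy0 hyn
    have h2 := cell_dot_nonneg L hmem (c := c)
    rw [dotProduct_add, ← h] at h2
    linarith
  have key : ∀ z : Fin d → ℝ, (∑ l, z l) = 0 → ‖z‖ ≤ 1 → 0 ≤ (L c - L a) ⬝ᵥ z := by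
    intro z hz0 hzn
    have h1 := hzero ((ε/2) • z)
      (by simp only [Pi.smul_apply, smul_eq_mul, ← Finset.mul_sum, hz0]; ring)
      (by rw [norm_smul, Real.norm_eq_abs, abs_of_pos (by linarith)]; nlinarith [norm_nonneg z])
    rw [dotProduct_smul] at h1
    have h2 : 0 ≤ (ε/2) * ((L c - L a) ⬝ᵥ z) := h1
    nlinarith
  have hconst : ∀ i j : Fin d, (L c - L a) i = (L c - L a) j := by
    intro i j
    have e1 := key _ (aux_sum j i) (aux_norm j i)
    have e2 := key _ (aux_sum i j) (aux_norm i j)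
    rw [dotProduct_sub] at e1 e2
    simp only [dotProduct_single, mul_one] at e1 e2
    linarith
  have hsw : ∑ i, w i = 1 := hw.1.2
  have hφzero : ∀ i, (L c - L a) i = 0 := by
    intro i
    have hr : (L c - L a) ⬝ᵥ w = ∑ l, (L c - L a) i * w l :=
      Finset.sum_congr rfl fun l _ => by rw [hconst l i]
    rw [← h] at hr
    rw [← Finset.mul_sum, hsw, mul_one] at hr
    linarith [hr]
  refine hnd c a hca (funext fun x => ?_)
  have := hφzero x
  simp only [Pi.sub_apply] at this
  linarith

end PMAux

/- ===================== span / dimension facts ===================== -/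

namespace PMAux

noncomputable def sumL (d : ℕ) : (Fin d → ℝ) →ₗ[ℝ] ℝ := ∑ i : Fin d, LinearMap.proj i

lemma sumL_apply {d : ℕ} (x : Fin d → ℝ) : sumL d x = ∑ i, x i := by simp [sumL]

lemma finrank_ker_sumL {d : ℕ} (hd : 1 ≤ d) :
    Module.finrank ℝ (LinearMap.ker (sumL d)) = d - 1 := by
  have hsurj : Function.Surjective (sumL d) := by
    intro r
    refine ⟨fun _ => r / d, ?_⟩
    rw [sumL_apply]
    simp [Finset.sum_const]
    field_simp
  have h := LinearMap.finrank_range_add_finrank_ker (sumL d)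
  rw [LinearMap.range_eq_top.2 hsurj] at h
  simp only [finrank_top, Module.finrank_self] at h
  have hd' : Module.finrank ℝ (Fin d → ℝ) = d := by simp
  omega

lemma exists_ball_of_affDim {d : ℕ} (hd : 1 ≤ d) (s : Set (Fin d → ℝ))
    (hconv : Convex ℝ s) (hsub : s ⊆ stdSimplex ℝ (Fin d))
    (hdim : affDim s = (d : ℤ) - 1) :
    ∃ w ∈ s, ∃ ε : ℝ, 0 < ε ∧ ∀ y : Fin d → ℝ, (∑ i, y i) = 0 → ‖y‖ < ε → w + y ∈ s := by
  have hne : s ≠ ∅ := by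
    intro h
    rw [affDim, if_pos h] at hdim
    omega
  have hsne : s.Nonempty := Set.nonempty_iff_ne_empty.2 hne
  have hfin : Module.finrank ℝ (affineSpan ℝ s).direction = d - 1 := by
    rw [affDim, if_neg hne] at hdim
    omega
  have hle : (affineSpan ℝ s).direction ≤ LinearMap.ker (sumL d) := by
    rw [direction_affineSpan, vectorSpan_def]
    rw [Submodule.span_le]
    rw [Set.vsub_subset_iff]
    intro x hx y hy
    have hx1 : ∑ i, x i = 1 := (hsub hx).2
    have hy1 : ∑ i, y i = 1 := (hsub hy).2
    simp only [SetLike.mem_coe, LinearMap.mem_ker]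
    rw [vsub_eq_sub, sumL_apply]
    simp [Finset.sum_sub_distrib, hx1, hy1]
  have hdir : (affineSpan ℝ s).direction = LinearMap.ker (sumL d) := by
    refine Submodule.eq_of_le_of_finrank_le hle ?_
    rw [hfin, finrank_ker_sumL hd]
  obtain ⟨w, hw⟩ := hsne.intrinsicInterior hconv
  refine ⟨w, intrinsicInterior_subset hw, ?_⟩
  rw [intrinsicInterior] at hw
  obtain ⟨y₀, hy₀, rfl⟩ := hw
  have hy₀' : Subtype.val ⁻¹' s ∈ nhds y₀ := mem_interior_iff_mem_nhds.1 hy₀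
  rw [Metric.mem_nhds_iff] at hy₀'
  obtain ⟨ε, hε, hball⟩ := hy₀'
  refine ⟨ε, hε, fun y hy0 hyn => ?_⟩
  have hymem : (y₀ : Fin d → ℝ) + y ∈ affineSpan ℝ s := by
    have hyd : y ∈ (affineSpan ℝ s).direction := by
      rw [hdir]
      simpa [sumL_apply] using hy0
    have := AffineSubspace.vadd_mem_of_mem_direction hyd y₀.2
    simpa [vadd_eq_add, add_comm] using this
  have : (⟨(y₀ : Fin d → ℝ) + y, hymem⟩ : affineSpan ℝ s) ∈ Metric.ball y₀ ε := by
    rw [Metric.mem_ball, Subtype.dist_eq]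
    simpa [dist_eq_norm] using hyn
  exact hball this

lemma finrank_span_singleton_le' {E : Type*} [NormedAddCommGroup E] [NormedSpace ℝ E]
    (x : E) : Module.finrank ℝ (Submodule.span ℝ {x} : Submodule ℝ E) ≤ 1 := by
  rcases eq_or_ne x 0 with rfl | hx
  · rw [Submodule.span_zero_singleton]
    simp
  · rw [finrank_span_singleton hx]

lemma measure_contra {d k : ℕ} (hd : 2 ≤ d) (Z : Fin k → Set (Fin d → ℝ)) (T : Finset (Fin k))
    (v' δ₀ : Fin d → ℝ) (r : ℝ) (hr : 0 < r)
    (hcov : ∀ z : Fin d → ℝ, (∑ i, z i) = 0 → ‖z‖ < r →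
      ∃ c ∈ T, ∃ q ∈ Z c, ∃ t : ℝ, v' + z = q + t • δ₀) :
    ∃ c ∈ T, (d:ℤ) - 2 ≤ affDim (Z c) := by
  by_contra hcon
  push_neg at hcon
  set one : Fin d → ℝ := fun _ => 1 with hone
  set W : Fin k → Set (Fin d → ℝ) :=
    fun c => {x | ∃ q ∈ Z c, ∃ t s : ℝ, x = q + t • δ₀ + s • one} with hW
  have hball : Metric.ball v' (r/2) ⊆ ⋃ c ∈ T, W c := by
    intro x hx
    rw [Metric.mem_ball, dist_eq_norm] at hx
    set ζ := x - v' with hζ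
    set τ : ℝ := (∑ i, ζ i) / d with hτ
    set z := ζ - τ • one with hz
    have hd0 : (d:ℝ) ≠ 0 := by positivity
    have hzsum : ∑ i, z i = 0 := by
      simp only [hz, Pi.sub_apply, Pi.smul_apply, hone, smul_eq_mul, mul_one,
        Finset.sum_sub_distrib, Finset.sum_const, Finset.card_univ, Fintype.card_fin, hτ, nsmul_eq_mul]
      field_simp
      ring
    have hτle : |τ| ≤ ‖ζ‖ := by
      rw [hτ, abs_div]
      rw [div_le_iff₀ (by positivity)]
      calc |∑ i, ζ i| ≤ ∑ i, |ζ i| := Finset.abs_sum_le_sum_abs _ _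
      _ ≤ ∑ _i : Fin d, ‖ζ‖ := Finset.sum_le_sum fun i _ =>
          by simpa using norm_le_pi_norm ζ i
      _ = ‖ζ‖ * d := by simp [Finset.sum_const, mul_comm]
      _ = ‖ζ‖ * |(d:ℝ)| := by rw [abs_of_nonneg (by positivity : (0:ℝ) ≤ (d:ℝ))]
    have hzn : ‖z‖ < r := by
      have h1 : ‖z‖ ≤ ‖ζ‖ + |τ| * ‖one‖ := by
        rw [hz]
        calc ‖ζ - τ • one‖ ≤ ‖ζ‖ + ‖τ • one‖ := norm_sub_le _ _
        _ = ‖ζ‖ + |τ| * ‖one‖ := by rw [norm_smul, Real.norm_eq_abs]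
      have hone1 : ‖one‖ ≤ 1 := by
        rw [pi_norm_le_iff_of_nonneg zero_le_one]
        intro i; simp [hone]
      nlinarith [abs_nonneg τ, norm_nonneg (ζ : Fin d → ℝ), hx]
    obtain ⟨c, hcT, q, hq, t, hqt⟩ := hcov z hzsum hzn
    refine Set.mem_biUnion hcT ?_
    refine ⟨q, hq, t, τ, ?_⟩
    have : x = v' + z + τ • one := by
      rw [hz, hζ]
      module
    rw [this, hqt]
  have hWnull : ∀ c ∈ T, volume (W c) = 0 := by
    intro c hcT
    rcases Set.eq_empty_or_nonempty (Z c) with hZe | ⟨z₀, hz₀⟩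
    · have : W c = ∅ := by
        rw [hW]
        ext x
        simp only [Set.mem_setOf_eq, Set.mem_empty_iff_false, iff_false]
        rintro ⟨q, hq, _⟩
        rw [hZe] at hq
        exact hq
      simp [this]
    · have hZne : Z c ≠ ∅ := Set.nonempty_iff_ne_empty.1 ⟨z₀, hz₀⟩
      have hfr : (Module.finrank ℝ (affineSpan ℝ (Z c)).direction) + 3 ≤ d := by
        have := hcon c hcT
        rw [affDim, if_neg hZne] at this
        omega
      set U : Submodule ℝ (Fin d → ℝ) :=
        (affineSpan ℝ (Z c)).direction ⊔ (Submodule.span ℝ {δ₀} ⊔ Submodule.span ℝ {one})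
        with hU
      have hUrank : Module.finrank ℝ U < d := by
        rw [hU]
        have h1 := Submodule.finrank_sup_add_finrank_inf_eq
          (affineSpan ℝ (Z c)).direction (Submodule.span ℝ {δ₀} ⊔ Submodule.span ℝ {one})
        have h2 := Submodule.finrank_sup_add_finrank_inf_eq
          (Submodule.span ℝ {δ₀}) (Submodule.span ℝ {one})
        have h3 := finrank_span_singleton_le' δ₀
        have h4 := finrank_span_singleton_le' one
        omega
      have hUtop : AffineSubspace.mk' z₀ U ≠ (⊤ : AffineSubspace ℝ (Fin d → ℝ)) := by
        intro h
        have hUt : U = ⊤ := by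
          have := AffineSubspace.direction_mk' z₀ U
          rw [h, AffineSubspace.direction_top] at this
          exact this.symm
        rw [hUt] at hUrank
        simp only [finrank_top] at hUrank
        have : Module.finrank ℝ (Fin d → ℝ) = d := by simp
        omega
      have hsub : W c ⊆ (AffineSubspace.mk' z₀ U : Set (Fin d → ℝ)) := by
        rintro x ⟨q, hq, t, s, rfl⟩
        rw [SetLike.mem_coe, AffineSubspace.mem_mk']
        have hqd : q - z₀ ∈ (affineSpan ℝ (Z c)).direction :=
          AffineSubspace.vsub_mem_direction (subset_affineSpan ℝ _ hq)
            (subset_affineSpan ℝ _ hz₀)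
        have hδ : t • δ₀ ∈ Submodule.span ℝ {δ₀} :=
          Submodule.smul_mem _ _ (Submodule.mem_span_singleton_self δ₀)
        have hone' : s • one ∈ Submodule.span ℝ {one} :=
          Submodule.smul_mem _ _ (Submodule.mem_span_singleton_self one)
        have hre : q + t • δ₀ + s • one -ᵥ z₀ = (q - z₀) + (t • δ₀ + s • one) := by
          rw [vsub_eq_sub]; module
        rw [hre]
        exact Submodule.add_mem _ (Submodule.mem_sup_left hqd)
          (Submodule.mem_sup_right (Submodule.add_mem _ (Submodule.mem_sup_left hδ)
            (Submodule.mem_sup_right hone')))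
      exact measure_mono_null hsub
        (Measure.addHaar_affineSubspace volume _ hUtop)
  have hunull : volume (⋃ c ∈ T, W c) = 0 :=
    (measure_biUnion_null_iff T.countable_toSet).2 hWnull
  have hpos := Metric.measure_ball_pos volume v' (by linarith : 0 < r/2)
  have := measure_mono_null hball hunull
  exact absurd this (ne_of_gt hpos)

end PMAux

/- ===================== exit lemmas ===================== -/

namespace PMAux

variable {k d : ℕ} (L : Fin k → Fin d → ℝ)

lemma exit_constraint (b : Fin k) (q δ : Fin d → ℝ) (s₁ : ℝ) (hs₁ : 0 < s₁)
    (hq : q ∈ cell L b)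
    (hout : ∀ s : ℝ, 0 < s → s ≤ s₁ →
      q + s • δ ∈ stdSimplex ℝ (Fin d) ∧ q + s • δ ∉ cell L b) :
    ∃ c : Fin k, (L c - L b) ⬝ᵥ q = 0 ∧ (L c - L b) ⬝ᵥ δ < 0 := by
  by_contra hcon
  push_neg at hcon
  have hthr : ∀ c : Fin k, ∃ s₂ : ℝ, 0 < s₂ ∧ s₂ ≤ s₁ ∧
      ∀ s : ℝ, 0 < s → s ≤ s₂ → 0 ≤ (L c - L b) ⬝ᵥ (q + s • δ) := by
    intro c
    have hA : 0 ≤ (L c - L b) ⬝ᵥ q := by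
      rw [sub_dotProduct]
      have h : L b ⬝ᵥ q ≤ L c ⬝ᵥ q := hq.2 c
      linarith
    rcases eq_or_lt_of_le hA with hA0 | hApos
    · refine ⟨s₁, hs₁, le_refl _, fun s hs0 hss => ?_⟩
      have hB := hcon c hA0.symm
      rw [dotProduct_add, dotProduct_smul, ← hA0]
      have : 0 ≤ s * ((L c - L b) ⬝ᵥ δ) := mul_nonneg hs0.le hB
      simpa using this
    · refine ⟨min s₁ ((L c - L b) ⬝ᵥ q / (|(L c - L b) ⬝ᵥ δ| + 1)),
        lt_min hs₁ (div_pos hApos (by positivity)), min_le_left _ _, fun s hs0 hss => ?_⟩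
      rw [dotProduct_add, dotProduct_smul, smul_eq_mul]
      have hB := abs_nonneg ((L c - L b) ⬝ᵥ δ)
      have h2 : s ≤ (L c - L b) ⬝ᵥ q / (|(L c - L b) ⬝ᵥ δ| + 1) :=
        le_trans hss (min_le_right _ _)
      have h3 := neg_abs_le ((L c - L b) ⬝ᵥ δ)
      rw [le_div_iff₀ (by positivity)] at h2
      nlinarith
  choose s₂ hs₂pos hs₂le hs₂prop using hthr
  have hnek : Nonempty (Fin k) := ⟨b⟩
  set s₀ : ℝ := Finset.univ.inf' (Finset.univ_nonempty) s₂ with hs₀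
  have hs₀pos : 0 < s₀ := by
    rw [hs₀, Finset.lt_inf'_iff]
    exact fun c _ => hs₂pos c
  have hs₀le : s₀ ≤ s₁ := le_trans (Finset.inf'_le _ (Finset.mem_univ b)) (hs₂le b)
  have hmem : q + s₀ • δ ∈ cell L b := by
    refine ⟨(hout s₀ hs₀pos hs₀le).1, fun c => ?_⟩
    have h5 := hs₂prop c s₀ hs₀pos (Finset.inf'_le _ (Finset.mem_univ c))
    rw [sub_dotProduct] at h5
    show L b ⬝ᵥ (q + s₀ • δ) ≤ L c ⬝ᵥ (q + s₀ • δ)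
    linarith
  exact (hout s₀ hs₀pos hs₀le).2 hmem

lemma exit_point (b : Fin k) (p x : Fin d → ℝ) (hp : p ∈ cell L b)
    (hx : x ∈ stdSimplex ℝ (Fin d)) (hxn : x ∉ cell L b) :
    ∃ t : ℝ, 0 ≤ t ∧ t < 1 ∧ p + t • (x - p) ∈ cell L b ∧
      ∀ s : ℝ, t < s → s ≤ 1 → p + s • (x - p) ∉ cell L b ∧
        p + s • (x - p) ∈ stdSimplex ℝ (Fin d) := by
  have hseg : ∀ s : ℝ, 0 ≤ s → s ≤ 1 → p + s • (x - p) ∈ stdSimplex ℝ (Fin d) := by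
    intro s hs0 hs1
    have := (convex_stdSimplex ℝ (Fin d)) hp.1 hx (by linarith : (0:ℝ) ≤ 1 - s) hs0 (by ring)
    convert this using 1
    simp only [smul_sub]
    module
  set S : Set ℝ := {t | t ∈ Set.Icc (0:ℝ) 1 ∧ p + t • (x - p) ∈ cell L b} with hS
  have hp0 : p + (0:ℝ) • (x - p) = p := by module
  have hSne : S.Nonempty := ⟨0, ⟨le_refl _, zero_le_one⟩, by rw [hp0]; exact hp⟩
  have hSbdd : BddAbove S := ⟨1, fun t ht => ht.1.2⟩
  have hSclosed : IsClosed S := by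
    refine IsClosed.inter isClosed_Icc ?_
    have : Continuous fun t : ℝ => p + t • (x - p) := by continuity
    exact (isClosed_cell L b).preimage this
  set t := sSup S with ht
  have htS : t ∈ S := hSclosed.csSup_mem hSne hSbdd
  have ht1 : t ≤ 1 := htS.1.2
  have htne : t ≠ 1 := by
    intro h
    rw [h] at htS
    have hx1 : p + (1:ℝ) • (x - p) = x := by module
    have h2 : p + (1:ℝ) • (x - p) ∈ cell L b := htS.2
    rw [hx1] at h2
    exact hxn h2
  refine ⟨t, htS.1.1, lt_of_le_of_ne ht1 htne, htS.2, fun s hts hs1 => ?_⟩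
  constructor
  · intro hmem
    have : s ∈ S := ⟨⟨le_trans htS.1.1 hts.le, hs1⟩, hmem⟩
    exact absurd (le_csSup hSbdd this) (not_le.2 hts)
  · exact hseg s (le_trans htS.1.1 hts.le) hs1

end PMAux

namespace PMAux

variable {k d : ℕ} (L : Fin k → Fin d → ℝ)

set_option maxHeartbeats 8000000 in
lemma core (hd : 2 ≤ d) (hnd : NondegenerateGame L) (b : Fin k)
    (u : Fin d → ℝ) (hu : u ∈ stdSimplex ℝ (Fin d)) (hub : u ∉ cell L b) :
    ∃ c : Fin k, c ∈ nbhd L b ∧ c ≠ b ∧ 0 < (L b - L c) ⬝ᵥ u := by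
  have hd1 : 1 ≤ d := by omega
  obtain ⟨w, hw, ε, hε, hball⟩ := exists_ball_of_affDim hd1 (cell L b)
    (convex_cell L b) (fun x hx => hx.1) (hnd.2 b)
  have hwpos : ∀ i, ε/2 ≤ w i := interior_coord_pos L hd hε hball
  obtain ⟨t₀, ht₀0, ht₀1, hv, hvout⟩ := exit_point L b w u hw hu hub
  set v := w + t₀ • (u - w) with hvdef
  set δ := u - v with hδdef
  have hδsum : ∑ i, δ i = 0 := by
    have h1 : ∑ i, u i = 1 := hu.2
    have h2 : ∑ i, v i = 1 := hv.1.2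
    simp [hδdef, Finset.sum_sub_distrib, h1, h2]
  have hvs : ∀ s : ℝ, 0 < s → s ≤ 1 →
      v + s • δ ∈ stdSimplex ℝ (Fin d) ∧ v + s • δ ∉ cell L b := by
    intro s hs0 hs1
    have heq : v + s • δ = w + (t₀ + s*(1 - t₀)) • (u - w) := by
      rw [hδdef, hvdef]; module
    have hrange1 : t₀ < t₀ + s*(1-t₀) := by nlinarith
    have hrange2 : t₀ + s*(1-t₀) ≤ 1 := by nlinarith
    have h3 := hvout _ hrange1 hrange2
    rw [heq]
    exact ⟨h3.2, h3.1⟩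
  have hvpos : ∀ i, (1 - t₀) * (ε/2) ≤ v i := by
    intro i
    have hui : 0 ≤ u i := hu.1 i
    have hvi : v i = (1 - t₀) * w i + t₀ * u i := by
      simp [hvdef]; ring
    rw [hvi]
    have := hwpos i
    nlinarith
  set mv : ℝ := (1 - t₀) * (ε/2) with hmv
  have hmvpos : 0 < mv := by
    rw [hmv]; nlinarith
  obtain ⟨e, he1, he2⟩ := exit_constraint L b v δ 1 one_pos hv (fun s h1 h2 => hvs s h1 h2)
  set Φ : ℝ := 1 + ∑ c : Fin k, ∑ i, |(L c - L b) i| with hΦ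
  have hΦpos : (0:ℝ) < Φ := by
    rw [hΦ]; positivity
  have hΦbound : ∀ (c : Fin k) (z : Fin d → ℝ), |(L c - L b) ⬝ᵥ z| ≤ Φ * ‖z‖ := by
    intro c z
    refine le_trans (dot_abs_le _ z) ?_
    have h1 : ∑ i, |(L c - L b) i| ≤ Φ := by
      rw [hΦ]
      have := Finset.single_le_sum (f := fun c' : Fin k => ∑ i, |(L c' - L b) i|)
        (fun c' _ => by positivity) (Finset.mem_univ c)
      linarith
    exact mul_le_mul_of_nonneg_right h1 (norm_nonneg z)
  set T₁ : Finset (Fin k) := Finset.univ.filter (fun c => (L c - L b) ⬝ᵥ δ < 0) with hT₁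
  have hT₁ne : T₁.Nonempty := ⟨e, by rw [hT₁, Finset.mem_filter]; exact ⟨Finset.mem_univ e, he2⟩⟩
  set γ : ℝ := T₁.inf' hT₁ne (fun c => -((L c - L b) ⬝ᵥ δ)) with hγ
  have hγpos : 0 < γ := by
    rw [hγ, Finset.lt_inf'_iff]
    intro c hc
    rw [hT₁, Finset.mem_filter] at hc
    linarith [hc.2]
  have hγle : ∀ c : Fin k, (L c - L b) ⬝ᵥ δ < 0 → (L c - L b) ⬝ᵥ δ ≤ -γ := by
    intro c hc
    have : γ ≤ -((L c - L b) ⬝ᵥ δ) := Finset.inf'_le _ (by rw [hT₁, Finset.mem_filter]; exact ⟨Finset.mem_univ c, hc⟩)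
    linarith
  set D : ℝ := ‖δ‖ with hD
  have hDnn : 0 ≤ D := norm_nonneg _
  set ρ : ℝ := min (mv/(2*(D+1))) (γ/(4*Φ*(D+1))) with hρ
  have hρpos : 0 < ρ := by
    refine lt_min ?_ ?_
    · exact div_pos hmvpos (by nlinarith)
    · exact div_pos hγpos (by nlinarith)
  have hρD1 : ρ * D < mv/2 := by
    have h1 : ρ ≤ mv/(2*(D+1)) := min_le_left _ _
    rw [le_div_iff₀ (by positivity)] at h1
    nlinarith
  have hρD2 : Φ * (ρ*D) ≤ γ/4 := by
    have h1 : ρ ≤ γ/(4*Φ*(D+1)) := min_le_right _ _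
    rw [le_div_iff₀ (by positivity)] at h1
    nlinarith
  set Big : ℝ := Φ*(‖w - v‖ + ε) + 1 with hBig
  have hBpos : 0 < Big := by
    rw [hBig]
    have : 0 ≤ Φ*(‖w - v‖ + ε) := by positivity
    linarith
  set lam : ℝ := min (1/2) (min (ρ*γ/(2*Big)) (γ/(4*Φ*(‖w - v‖ + ε + 1)))) with hlam
  have hlampos : 0 < lam := by
    refine lt_min (by norm_num) (lt_min ?_ ?_)
    · exact div_pos (mul_pos hρpos hγpos) (by linarith)
    · refine div_pos hγpos ?_
      have h0 : 0 ≤ ‖w - v‖ := norm_nonneg _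
      nlinarith
  have hlam12 : lam ≤ 1/2 := min_le_left _ _
  have hlamB : lam * Big ≤ ρ*γ/2 := by
    have h1 : lam ≤ ρ*γ/(2*Big) := le_trans (min_le_right _ _) (min_le_left _ _)
    rw [le_div_iff₀ (by positivity)] at h1
    nlinarith
  have hlamwv : Φ * (lam * (‖w - v‖ + ε)) ≤ γ/4 := by
    have h1 : lam ≤ γ/(4*Φ*(‖w - v‖ + ε + 1)) := le_trans (min_le_right _ _) (min_le_right _ _)
    have hXnn : (0:ℝ) ≤ ‖w - v‖ + ε := by positivity
    rw [le_div_iff₀ (by positivity)] at h1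
    have h2 : Φ * (lam * (‖w - v‖ + ε)) ≤ Φ * (lam * (‖w - v‖ + ε + 1)) := by
      nlinarith
    nlinarith
  set v' := v + lam • (w - v) with hv'
  set r : ℝ := lam * ε with hrr
  have hrpos : 0 < r := by rw [hrr]; exact mul_pos hlampos hε
  set Z : Fin k → Set (Fin d → ℝ) := fun c => cell L b ∩ cell L c with hZ
  set T : Finset (Fin k) := T₁.filter (fun c => (L c - L b) ⬝ᵥ v ≤ γ/2) with hT
  have hcov : ∀ z : Fin d → ℝ, (∑ i, z i) = 0 → ‖z‖ < r →
      ∃ c ∈ T, ∃ q ∈ Z c, ∃ t : ℝ, v' + z = q + t • δ := by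
    intro z hz0 hzn
    set y := lam⁻¹ • z with hy
    have hy0 : ∑ i, y i = 0 := by
      simp [hy, Pi.smul_apply, smul_eq_mul, ← Finset.mul_sum, hz0]
    have hyn : ‖y‖ < ε := by
      rw [hy, norm_smul, Real.norm_eq_abs, abs_inv, abs_of_pos hlampos]
      calc lam⁻¹ * ‖z‖ < lam⁻¹ * (lam * ε) :=
            mul_lt_mul_of_pos_left (by rw [hrr] at hzn; exact hzn) (inv_pos.2 hlampos)
      _ = ε := by field_simp
    have hzy : lam • y = z := by
      rw [hy, smul_smul, mul_inv_cancel₀ (ne_of_gt hlampos), one_smul]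
    have hwy : w + y ∈ cell L b := hball y hy0 hyn
    set p := v' + z with hp
    have hpeq : p = v + lam • (w + y - v) := by
      rw [hp, hv', ← hzy]; module
    have hpcell : p ∈ cell L b := by
      have h8 := convex_cell L b hv hwy (by linarith : (0:ℝ) ≤ 1 - lam)
        hlampos.le (by ring)
      have h9 : (1 - lam) • v + lam • (w + y) = v + lam • (w + y - v) := by module
      rw [hpeq, ← h9]
      exact h8
    have hppos : ∀ i, mv/2 ≤ p i := by
      intro i
      have h1 : 0 ≤ (w + y) i := hwy.1.1 i
      have h2 := hvpos i
      have h3 : p i = (1 - lam) * v i + lam * (w + y) i := by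
        rw [hpeq]
        simp only [Pi.add_apply, Pi.smul_apply, Pi.sub_apply, smul_eq_mul]
        ring
      rw [h3, ← hmv] at *
      nlinarith
    have hsum_p : ∑ i, p i = 1 := hpcell.1.2
    have hDi : ∀ i, |δ i| ≤ D := by
      intro i
      rw [hD]
      simpa using norm_le_pi_norm δ i
    have hseg : ∀ s : ℝ, 0 ≤ s → s ≤ 1 → p + s • (ρ • δ) ∈ stdSimplex ℝ (Fin d) := by
      intro s hs0 hs1
      constructor
      · intro i
        have h1 := abs_le.1 (hDi i)
        have h2 := hppos i
        simp only [Pi.add_apply, Pi.smul_apply, smul_eq_mul]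
        have h3 : 0 ≤ s*ρ := mul_nonneg hs0 hρpos.le
        have h4 : s*ρ*(-D) ≤ s*ρ*(δ i) := mul_le_mul_of_nonneg_left h1.1 h3
        have h5 : s*ρ*D ≤ ρ*D := by
          nlinarith [mul_nonneg (mul_nonneg (sub_nonneg.2 hs1) hρpos.le) hDnn]
        nlinarith
      · have : ∑ i, (p + s • (ρ • δ)) i = (∑ i, p i) + s * ρ * (∑ i, δ i) := by
          simp only [Pi.add_apply, Pi.smul_apply, smul_eq_mul, Finset.sum_add_distrib,
            ← Finset.mul_sum]
          ring
        rw [this, hsum_p, hδsum]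
        ring
    have hxp_not : p + ρ • δ ∉ cell L b := by
      intro hmem
      have hle : L b ⬝ᵥ (p + ρ • δ) ≤ L e ⬝ᵥ (p + ρ • δ) := hmem.2 e
      have hge : 0 ≤ (L e - L b) ⬝ᵥ (p + ρ • δ) := by
        rw [sub_dotProduct]; linarith
      have hdp : (L e - L b) ⬝ᵥ p = lam * ((L e - L b) ⬝ᵥ (w + y - v)) := by
        rw [hpeq, dotProduct_add, dotProduct_smul, he1, smul_eq_mul]
        ring
      have hb1 : |(L e - L b) ⬝ᵥ (w + y - v)| ≤ Φ * (‖w - v‖ + ε) := by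
        refine le_trans (hΦbound e _) ?_
        have h1 : ‖w + y - v‖ ≤ ‖w - v‖ + ε := by
          have h2 : w + y - v = (w - v) + y := by module
          rw [h2]
          calc ‖(w - v) + y‖ ≤ ‖w - v‖ + ‖y‖ := norm_add_le _ _
          _ ≤ ‖w - v‖ + ε := by linarith
        nlinarith [hΦpos]
      have heδ : (L e - L b) ⬝ᵥ δ ≤ -γ := hγle e he2
      have hfinal : (L e - L b) ⬝ᵥ (p + ρ • δ) < 0 := by
        rw [dotProduct_add, dotProduct_smul, smul_eq_mul, hdp]
        have h1 : lam * ((L e - L b) ⬝ᵥ (w + y - v)) ≤ lam * (Φ * (‖w - v‖ + ε)) := by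
          have := abs_le.1 hb1
          nlinarith
        have h2 : lam * (Φ * (‖w - v‖ + ε)) ≤ lam * Big := by
          rw [hBig]; nlinarith
        have h3 : ρ * ((L e - L b) ⬝ᵥ δ) ≤ ρ * (-γ) := by nlinarith
        nlinarith
      linarith
    obtain ⟨t₂, ht₂0, ht₂1, hq, hqout⟩ := exit_point L b p (p + ρ • δ) hpcell
      (by simpa using hseg 1 zero_le_one le_rfl) hxp_not
    have hxmp : (p + ρ • δ) - p = ρ • δ := by module
    rw [hxmp] at hq hqout
    set q := p + t₂ • (ρ • δ) with hqdef
    have hout2 : ∀ s : ℝ, 0 < s → s ≤ 1 - t₂ →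
        q + s • (ρ • δ) ∈ stdSimplex ℝ (Fin d) ∧ q + s • (ρ • δ) ∉ cell L b := by
      intro s hs0 hs1
      have heq2 : q + s • (ρ • δ) = p + (t₂ + s) • (ρ • δ) := by
        rw [hqdef]; module
      rw [heq2]
      have h5 := hqout (t₂ + s) (by linarith) (by linarith)
      exact ⟨h5.2, h5.1⟩
    obtain ⟨c, hc1, hc2⟩ := exit_constraint L b q (ρ • δ) (1 - t₂) (by linarith) hq hout2
    have hcδ : (L c - L b) ⬝ᵥ δ < 0 := by
      rw [dotProduct_smul, smul_eq_mul] at hc2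
      nlinarith
    have hqv : ‖v - q‖ ≤ lam * (‖w - v‖ + ε) + ρ * D := by
      have hvq : v - q = (-lam) • (w + y - v) + (-(t₂ * ρ)) • δ := by
        rw [hqdef, hpeq]; module
      rw [hvq]
      calc ‖(-lam) • (w + y - v) + (-(t₂ * ρ)) • δ‖
          ≤ ‖(-lam) • (w + y - v)‖ + ‖(-(t₂ * ρ)) • δ‖ := norm_add_le _ _
      _ = lam * ‖w + y - v‖ + (t₂ * ρ) * ‖δ‖ := by
          rw [norm_smul, norm_smul, Real.norm_eq_abs, Real.norm_eq_abs,
            abs_neg, abs_neg, abs_of_pos hlampos, abs_of_nonneg (by nlinarith : 0 ≤ t₂ * ρ)]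
      _ ≤ lam * (‖w - v‖ + ε) + ρ * D := by
          have h1 : ‖w + y - v‖ ≤ ‖w - v‖ + ε := by
            have h2 : w + y - v = (w - v) + y := by module
            rw [h2]
            calc ‖(w - v) + y‖ ≤ ‖w - v‖ + ‖y‖ := norm_add_le _ _
            _ ≤ ‖w - v‖ + ε := by linarith
          have h3 : t₂ * ρ * ‖δ‖ ≤ ρ * D := by
            rw [← hD]
            nlinarith [mul_nonneg (mul_nonneg (sub_nonneg.2 ht₂1.le) hρpos.le) hDnn]
          nlinarith
    have hcv : (L c - L b) ⬝ᵥ v ≤ γ/2 := by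
      have h7 : (L c - L b) ⬝ᵥ v = (L c - L b) ⬝ᵥ (v - q) := by
        rw [dotProduct_sub, hc1]; ring
      have h6 := hΦbound c (v - q)
      have h8 : Φ * ‖v - q‖ ≤ Φ * (lam * (‖w - v‖ + ε) + ρ * D) :=
        mul_le_mul_of_nonneg_left hqv hΦpos.le
      have h9 : Φ * (lam * (‖w - v‖ + ε) + ρ * D) ≤ γ/2 := by
        have := hlamwv
        have := hρD2
        nlinarith
      have h10 := (abs_le.1 h6).2
      rw [h7]
      exact le_trans (le_trans h10 h8) h9
    have hqcellc : q ∈ cell L c := by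
      refine ⟨hq.1, fun c' => ?_⟩
      have h1 : L c ⬝ᵥ q = L b ⬝ᵥ q := by
        rw [sub_dotProduct] at hc1
        linarith
      have h2 : L b ⬝ᵥ q ≤ L c' ⬝ᵥ q := hq.2 c'
      show L c ⬝ᵥ q ≤ L c' ⬝ᵥ q
      linarith
    refine ⟨c, ?_, q, ⟨hq, hqcellc⟩, -(t₂ * ρ), ?_⟩
    · rw [hT, Finset.mem_filter]
      exact ⟨by rw [hT₁, Finset.mem_filter]; exact ⟨Finset.mem_univ c, hcδ⟩, hcv⟩
    · show p = q + (-(t₂ * ρ)) • δ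
      rw [hqdef]
      module
  obtain ⟨c, hcT, hcdim⟩ := measure_contra hd Z T v' δ r hrpos hcov
  rw [hT, Finset.mem_filter] at hcT
  obtain ⟨hcT₁, hcv⟩ := hcT
  rw [hT₁, Finset.mem_filter] at hcT₁
  have hcδ : (L c - L b) ⬝ᵥ δ < 0 := hcT₁.2
  have hcb : c ≠ b := by
    intro h
    rw [h, sub_self, zero_dotProduct] at hcδ
    exact lt_irrefl 0 hcδ
  refine ⟨c, ?_, hcb, ?_⟩
  · show (d:ℤ) - 2 ≤ affDim (cell L b ∩ cell L c)
    exact hcdim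
  · have hueq : v + δ = u := by rw [hδdef]; module
    have h1 : (L c - L b) ⬝ᵥ δ ≤ -γ := hγle c hcδ
    have hfin : 0 < (L b - L c) ⬝ᵥ (v + δ) := by
      rw [dotProduct_add, sub_dotProduct, sub_dotProduct]
      rw [sub_dotProduct] at h1 hcv
      linarith
    rw [← hueq]
    exact hfin

end PMAux

/- ===================== main theorem ===================== -/

lemma PMAux.affDim_ne_empty {d : ℕ} {s : Set (Fin d → ℝ)} {n : ℤ} (hn : 0 ≤ n)
    (h : affDim s = n) : s.Nonempty := by
  rw [Set.nonempty_iff_ne_empty]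
  intro he
  rw [affDim, if_pos he] at h
  omega

set_option maxHeartbeats 1000000 in
/-- In a non-degenerate game, for distinct actions `a, b` and `u ∈ C_a`, there is a
neighbour `c ∈ N_b \ {b}` with `⟨ℓ_b − ℓ_c, u⟩ ≥ 0`; and if moreover `u ∉ C_b` then
`c` can be chosen with `⟨ℓ_b − ℓ_c, u⟩ > 0`. -/
theorem exists_neighbour_improvement {k d : ℕ} (L : Fin k → Fin d → ℝ)
    (hnd : NondegenerateGame L) (a b : Fin k) (hab : a ≠ b)
    (u : Fin d → ℝ) (hu : u ∈ cell L a) :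
    (∃ c ∈ nbhd L b \ {b}, 0 ≤ ∑ x, (L b x - L c x) * u x) ∧
    (u ∉ cell L b → ∃ c ∈ nbhd L b \ {b}, 0 < ∑ x, (L b x - L c x) * u x) := by
  classical
  rcases Nat.lt_or_ge d 2 with hdlt | hd
  · -- degenerate dimensions
    interval_cases d
    · exfalso
      have h1 : ∑ x : Fin 0, u x = 1 := hu.1.2
      simp at h1
    · exfalso
      have hPa := hnd.2 a
      have hPb := hnd.2 b
      have hane : (cell L a).Nonempty := PMAux.affDim_ne_empty (n := 0) (by norm_num)
        (by simpa [Pareto] using hPa)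
      have hbne : (cell L b).Nonempty := PMAux.affDim_ne_empty (n := 0) (by norm_num)
        (by simpa [Pareto] using hPb)
      obtain ⟨pa, hpa⟩ := hane
      obtain ⟨pb, hpb⟩ := hbne
      have hpa1 : pa 0 = 1 := by
        have := hpa.1.2
        simpa [Fin.sum_univ_one] using this
      have hpb1 : pb 0 = 1 := by
        have := hpb.1.2
        simpa [Fin.sum_univ_one] using this
      have h1 : L a 0 ≤ L b 0 := by
        have := hpa.2 b
        simpa [Fin.sum_univ_one, hpa1] using this
      have h2 : L b 0 ≤ L a 0 := by
        have := hpb.2 a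
        simpa [Fin.sum_univ_one, hpb1] using this
      refine hnd.1 a b hab (funext fun x => ?_)
      have hx : x = 0 := Subsingleton.elim x 0
      rw [hx]
      linarith
  · -- main case
    open Matrix in
    have hsum_dot : ∀ (c : Fin k) (x : Fin d → ℝ),
        ∑ i, (L b i - L c i) * x i = (L b - L c) ⬝ᵥ x := fun c x => rfl
    have part2 : ∀ u' : Fin d → ℝ, u' ∈ stdSimplex ℝ (Fin d) → u' ∉ cell L b →
        ∃ c ∈ nbhd L b \ {b}, 0 < ∑ x, (L b x - L c x) * u' x := by
      intro u' h1 h2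
      obtain ⟨c, hc1, hc2, hc3⟩ := PMAux.core L hd hnd b u' h1 h2
      refine ⟨c, ⟨hc1, by simpa using hc2⟩, ?_⟩
      rw [hsum_dot]
      exact hc3
    refine ⟨?_, fun h2 => part2 u hu.1 h2⟩
    by_contra hcon
    push_neg at hcon
    -- an interior point of C_a
    obtain ⟨wa, hwa, εa, hεa, hballa⟩ := PMAux.exists_ball_of_affDim (by omega) (cell L a)
      (PMAux.convex_cell L a) (fun x hx => hx.1) (hnd.2 a)
    have hstrict : 0 < (L b - L a) ⬝ᵥ wa :=
      PMAux.strict_at_interior L hnd.1 (Ne.symm hab) hεa hwa hballa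
    have hXa : 0 ≤ (L b - L a) ⬝ᵥ u := PMAux.cell_dot_nonneg L hu (c := b)
    -- perturbed points
    have hmix : ∀ ε : ℝ, 0 < ε → ε ≤ 1 →
        (u + ε • (wa - u)) ∈ stdSimplex ℝ (Fin d) ∧ (u + ε • (wa - u)) ∉ cell L b := by
      intro ε h0 h1
      constructor
      · have h3 := (convex_stdSimplex ℝ (Fin d)) hu.1 hwa.1
          (by linarith : (0:ℝ) ≤ 1 - ε) h0.le (by ring)
        have h4 : (1 - ε) • u + ε • wa = u + ε • (wa - u) := by module
        rw [← h4]
        exact h3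
      · intro hmem
        have h5 : L b ⬝ᵥ (u + ε • (wa - u)) ≤ L a ⬝ᵥ (u + ε • (wa - u)) := hmem.2 a
        have h6 : (L b - L a) ⬝ᵥ (u + ε • (wa - u)) =
            (L b - L a) ⬝ᵥ u + ε * ((L b - L a) ⬝ᵥ wa - (L b - L a) ⬝ᵥ u) := by
          rw [dotProduct_add, dotProduct_smul, dotProduct_sub, smul_eq_mul]
        have h7 : 0 < (L b - L a) ⬝ᵥ (u + ε • (wa - u)) := by
          rw [h6]
          nlinarith
        rw [sub_dotProduct] at h7
        linarith
    -- the bad finite set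
    set F : Finset (Fin k) := Finset.univ.filter (fun c => c ∈ nbhd L b \ ({b} : Set (Fin k)))
      with hF
    have hmemF : ∀ c : Fin k, c ∈ nbhd L b \ ({b} : Set (Fin k)) → c ∈ F := by
      intro c hc
      rw [hF, Finset.mem_filter]
      exact ⟨Finset.mem_univ c, hc⟩
    rcases F.eq_empty_or_nonempty with hFe | hFne
    · obtain ⟨c, hc1, _⟩ := part2 (u + (1:ℝ) • (wa - u)) (hmix 1 one_pos le_rfl).1
        (hmix 1 one_pos le_rfl).2
      have := hmemF c hc1
      rw [hFe] at this
      exact absurd this (Finset.notMem_empty c)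
    · set g : Fin k → ℝ := fun c =>
        (-((L b - L c) ⬝ᵥ u)) / (|(L b - L c) ⬝ᵥ u| + |(L b - L c) ⬝ᵥ wa| + 1) with hg
      have hXneg : ∀ c ∈ F, (L b - L c) ⬝ᵥ u < 0 := by
        intro c hc
        rw [hF, Finset.mem_filter] at hc
        have := hcon c hc.2
        rw [hsum_dot] at this
        exact this
      have hgpos : ∀ c ∈ F, 0 < g c := by
        intro c hc
        have := hXneg c hc
        exact div_pos (by linarith) (by positivity)
      set ε : ℝ := min 1 (F.inf' hFne g) with hε
      have hεpos : 0 < ε := by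
        refine lt_min one_pos ?_
        rw [Finset.lt_inf'_iff]
        exact hgpos
      have hε1 : ε ≤ 1 := min_le_left _ _
      obtain ⟨c, hc1, hc3⟩ := part2 (u + ε • (wa - u)) (hmix ε hεpos hε1).1
        (hmix ε hεpos hε1).2
      rw [hsum_dot] at hc3
      have hcF : c ∈ F := hmemF c hc1
      have hεg : ε ≤ g c := le_trans (min_le_right _ _) (Finset.inf'_le _ hcF)
      have hXc := hXneg c hcF
      -- derive contradiction
      have h6 : (L b - L c) ⬝ᵥ (u + ε • (wa - u)) =
          (L b - L c) ⬝ᵥ u + ε * ((L b - L c) ⬝ᵥ wa - (L b - L c) ⬝ᵥ u) := by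
        rw [dotProduct_add, dotProduct_smul, dotProduct_sub, smul_eq_mul]
      rw [h6] at hc3
      rw [hg] at hεg
      simp only at hεg
      rw [le_div_iff₀ (by positivity)] at hεg
      have habs1 := abs_le.1 (le_refl |(L b - L c) ⬝ᵥ u|)
      have habs2 := abs_le.1 (le_refl |(L b - L c) ⬝ᵥ wa|)
      nlinarith [abs_nonneg ((L b - L c) ⬝ᵥ u), abs_nonneg ((L b - L c) ⬝ᵥ wa),
        neg_abs_le ((L b - L c) ⬝ᵥ u), le_abs_self ((L b - L c) ⬝ᵥ u),
        neg_abs_le ((L b - L c) ⬝ᵥ wa), le_abs_self ((L b - L c) ⬝ᵥ wa)]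
end
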